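/- (Maximal realizable cost equals the worst-case maximal inverse information density; the supremum over randomized functions is superfluous.) Assume P_{Y|X=x}(y) > 0 for all x ∈ 𝒳, y ∈ 𝒴. Then the supremum, over all finite nonempty sets 𝒰, kernels P_{U|X}, finite nonempty sets Û, and cost functions c : 𝒰 × Û → ℝ≥0 with min_{û∈Û} ∑_u c(u,û)·P_U(u) > 0, of log( min_{û∈Û} ∑_u c(u,û)·P_U(u) / min_{y∈𝒴} min_{û∈Û} ∑_u c(u,û)·P_{U|Y=y}(u) ), equals max_{y∈𝒴} max_{x∈𝒳} log( P_X(x) / P_{X|Y=y}(x) ). -/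

import Mathlib

open Finset Real

/-- Maximal realizable cost equals the worst-case maximal inverse information density:
the supremum over all randomized functions `U` of `X` and all nonnegative cost functions `c`
(with positive minimal prior expected cost) of
`log(min_uh E[c(U,uh)] / min_y min_uh E[c(U,uh) | Y=y])` equals
`max_y max_x log(P_X(x)/P_{X|Y=y}(x))`; in particular the supremum over `U` is superfluous. -/
theorem stmt_17 {𝒳 𝒴 : Type} [Fintype 𝒳] [Nonempty 𝒳] [Fintype 𝒴] [Nonempty 𝒴]
    (PX : 𝒳 → ℝ) (hPXpos : ∀ x, 0 < PX x) (hPXsum : ∑ x, PX x = 1)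
    (K : 𝒳 → 𝒴 → ℝ) (hKpos : ∀ x y, 0 < K x y) (hKsum : ∀ x, ∑ y, K x y = 1) :
    IsLUB
      { r : ℝ |
        ∃ (𝒰 : Type) (_ : Fintype 𝒰) (_ : Nonempty 𝒰) (Q : 𝒳 → 𝒰 → ℝ)
          (Uhat : Type) (_ : Fintype Uhat) (_ : Nonempty Uhat) (c : 𝒰 → Uhat → ℝ),
          (∀ x u, 0 ≤ Q x u) ∧ (∀ x, ∑ u, Q x u = 1) ∧ (∀ u uh, 0 ≤ c u uh) ∧
          (0 < Finset.univ.inf' Finset.univ_nonempty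
            (fun uh => ∑ u, c u uh * (∑ x, Q x u * PX x))) ∧
          r = log
            (Finset.univ.inf' Finset.univ_nonempty
                (fun uh => ∑ u, c u uh * (∑ x, Q x u * PX x)) /
              Finset.univ.inf' Finset.univ_nonempty
                (fun y => Finset.univ.inf' Finset.univ_nonempty
                  (fun uh => ∑ u, c u uh *
                    (∑ x, Q x u * (PX x * K x y / (∑ x', PX x' * K x' y))))))}
      (Finset.univ.sup' Finset.univ_nonempty
        (fun y => Finset.univ.sup' Finset.univ_nonempty
          (fun x => log (PX x / (PX x * K x y / (∑ x', PX x' * K x' y)))))) := by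
  classical
  have hDpos : ∀ y : 𝒴, 0 < ∑ x', PX x' * K x' y := fun y =>
    Finset.sum_pos (fun x _ => mul_pos (hPXpos x) (hKpos x y)) univ_nonempty
  constructor
  · rintro r ⟨𝒰, _, _, Q, Uhat, _, _, c, hQ0, hQ1, hc0, hApos, rfl⟩
    set A := Finset.univ.inf' Finset.univ_nonempty
      (fun uh : Uhat => ∑ u, c u uh * (∑ x, Q x u * PX x)) with hA
    obtain ⟨y₀, -, hy₀⟩ := Finset.exists_mem_eq_inf' (univ_nonempty (α := 𝒴))
      (fun y => Finset.univ.inf' Finset.univ_nonempty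
        (fun uh => ∑ u, c u uh * (∑ x, Q x u * (PX x * K x y / (∑ x', PX x' * K x' y)))))
    rw [hy₀]
    obtain ⟨uh₀, -, huh₀⟩ := Finset.exists_mem_eq_inf' (univ_nonempty (α := Uhat))
      (fun uh => ∑ u, c u uh * (∑ x, Q x u * (PX x * K x y₀ / (∑ x', PX x' * K x' y₀))))
    rw [huh₀]
    obtain ⟨x₀, -, hx₀⟩ := Finset.exists_mem_eq_inf' (univ_nonempty (α := 𝒳))
      (fun x => K x y₀)
    have hKmin : ∀ x, K x₀ y₀ ≤ K x y₀ := by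
      intro x; rw [← hx₀]; exact Finset.inf'_le _ (Finset.mem_univ x)
    set m := K x₀ y₀ / (∑ x', PX x' * K x' y₀) with hm
    have hmpos : 0 < m := div_pos (hKpos x₀ y₀) (hDpos y₀)
    have key : m * A ≤ ∑ u, c u uh₀ * (∑ x, Q x u * (PX x * K x y₀ / (∑ x', PX x' * K x' y₀))) := by
      have h1 : m * A ≤ m * ∑ u, c u uh₀ * (∑ x, Q x u * PX x) := by
        apply mul_le_mul_of_nonneg_left _ hmpos.le
        exact Finset.inf'_le _ (Finset.mem_univ uh₀)
      refine h1.trans ?_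
      rw [Finset.mul_sum]
      apply Finset.sum_le_sum
      intro u _
      rw [mul_left_comm, Finset.mul_sum]
      apply mul_le_mul_of_nonneg_left _ (hc0 u uh₀)
      apply Finset.sum_le_sum
      intro x _
      rw [mul_left_comm]
      apply mul_le_mul_of_nonneg_left _ (hQ0 x u)
      rw [hm, div_mul_eq_mul_div, mul_comm, mul_div_assoc, mul_div_assoc]
      exact mul_le_mul_of_nonneg_left
        ((div_le_div_iff_of_pos_right (hDpos y₀)).mpr (hKmin x)) (hPXpos x).le
    have hBpos : 0 < ∑ u, c u uh₀ * (∑ x, Q x u * (PX x * K x y₀ / (∑ x', PX x' * K x' y₀))) :=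
      lt_of_lt_of_le (mul_pos hmpos hApos) key
    have hdiv : A / (∑ u, c u uh₀ * (∑ x, Q x u * (PX x * K x y₀ / (∑ x', PX x' * K x' y₀))))
        ≤ PX x₀ / (PX x₀ * K x₀ y₀ / (∑ x', PX x' * K x' y₀)) := by
      have h2 : A / (∑ u, c u uh₀ * (∑ x, Q x u * (PX x * K x y₀ / (∑ x', PX x' * K x' y₀))))
          ≤ A / (m * A) := div_le_div_of_nonneg_left hApos.le (mul_pos hmpos hApos) key
      refine h2.trans_eq ?_
      rw [mul_comm, ← div_div, div_self hApos.ne', hm]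
      field_simp
      rw [mul_div_mul_right _ _ (hPXpos x₀).ne']
    calc log (A / _) ≤ log (PX x₀ / (PX x₀ * K x₀ y₀ / (∑ x', PX x' * K x' y₀))) := by
          apply Real.log_le_log (div_pos hApos hBpos) hdiv
      _ ≤ _ := by
          refine le_trans (Finset.le_sup'
            (fun x => log (PX x / (PX x * K x y₀ / (∑ x', PX x' * K x' y₀))))
            (Finset.mem_univ x₀)) ?_
          exact Finset.le_sup'
            (fun y => Finset.univ.sup' Finset.univ_nonempty
              (fun x => log (PX x / (PX x * K x y / (∑ x', PX x' * K x' y)))))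
            (Finset.mem_univ y₀)
  · intro b hb
    apply hb
    obtain ⟨y₁, -, hy₁⟩ := Finset.exists_mem_eq_sup' (univ_nonempty (α := 𝒴))
      (fun y => Finset.univ.sup' Finset.univ_nonempty
        (fun x => log (PX x / (PX x * K x y / (∑ x', PX x' * K x' y)))))
    obtain ⟨x₁, -, hx₁⟩ := Finset.exists_mem_eq_sup' (univ_nonempty (α := 𝒳))
      (fun x => log (PX x / (PX x * K x y₁ / (∑ x', PX x' * K x' y₁))))
    refine ⟨𝒳, inferInstance, inferInstance, fun x u => if u = x then 1 else 0,
      PUnit, inferInstance, inferInstance, fun u _ => if u = x₁ then 1 else 0,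
      ?_, ?_, ?_, ?_, ?_⟩
    · intro x u; dsimp only; split <;> norm_num
    · intro x; simp
    · intro u uh; dsimp only; split <;> norm_num
    · have hprior : (Finset.univ.inf' Finset.univ_nonempty
          (fun _ : PUnit => ∑ u : 𝒳, (if u = x₁ then (1:ℝ) else 0) *
            (∑ x, (if u = x then (1:ℝ) else 0) * PX x))) = PX x₁ := by
        simp [ite_mul, Finset.sum_ite_eq', Finset.sum_ite_eq]
      rw [hprior]; exact hPXpos x₁
    · have hprior : (Finset.univ.inf' Finset.univ_nonempty
          (fun _ : PUnit => ∑ u : 𝒳, (if u = x₁ then (1:ℝ) else 0) *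
            (∑ x, (if u = x then (1:ℝ) else 0) * PX x))) = PX x₁ := by
        simp [ite_mul, Finset.sum_ite_eq', Finset.sum_ite_eq]
      have hpost : (fun y : 𝒴 => Finset.univ.inf' Finset.univ_nonempty
          (fun _ : PUnit => ∑ u : 𝒳, (if u = x₁ then (1:ℝ) else 0) *
            (∑ x, (if u = x then (1:ℝ) else 0) * (PX x * K x y / ∑ x', PX x' * K x' y))))
          = fun y => PX x₁ * K x₁ y / ∑ x', PX x' * K x' y := by
        funext y
        simp [ite_mul, Finset.sum_ite_eq', Finset.sum_ite_eq]
      rw [hprior, hpost]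
      obtain ⟨y₂, -, hy₂⟩ := Finset.exists_mem_eq_inf' (univ_nonempty (α := 𝒴))
        (fun y => PX x₁ * K x₁ y / ∑ x', PX x' * K x' y)
      rw [hy₂]
      apply le_antisymm
      · rw [hy₁, hx₁]
        have hle : PX x₁ * K x₁ y₂ / (∑ x', PX x' * K x' y₂)
            ≤ PX x₁ * K x₁ y₁ / (∑ x', PX x' * K x' y₁) := by
          rw [← hy₂]
          exact Finset.inf'_le _ (Finset.mem_univ y₁)
        have hpos1 : 0 < PX x₁ * K x₁ y₁ / (∑ x', PX x' * K x' y₁) :=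
          div_pos (mul_pos (hPXpos x₁) (hKpos x₁ y₁)) (hDpos y₁)
        have hpos2 : 0 < PX x₁ * K x₁ y₂ / (∑ x', PX x' * K x' y₂) :=
          div_pos (mul_pos (hPXpos x₁) (hKpos x₁ y₂)) (hDpos y₂)
        apply Real.log_le_log (div_pos (hPXpos x₁) hpos1)
        gcongr
        exact (hPXpos x₁).le
      · refine le_trans (Finset.le_sup'
          (fun x => log (PX x / (PX x * K x y₂ / (∑ x', PX x' * K x' y₂))))
          (Finset.mem_univ x₁)) ?_
        exact Finset.le_sup'
          (fun y => Finset.univ.sup' Finset.univ_nonempty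
            (fun x => log (PX x / (PX x * K x y / (∑ x', PX x' * K x' y)))))
          (Finset.mem_univ y₂)
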